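/- The four points V₃=(8,−2,−4), V₄=(6,−3,−6), V₁₃=(12,0,0) and V₁₅=(10,−1,−2) of ℝ³ are collinear (they lie on a common line), and moreover V₁₅ lies in the open segment between V₇=(10,−1,−8) and V₈=(10,−1,1). Hence the line L₂ through V₄ and V₁₃ meets the primary knot K₀ in at least the four points V₃, V₄, V₁₃, V₁₅. -/

import Mathlib

noncomputable section

/-- A line in ℝ³: a 1-dimensional affine subspace, in parametric form. -/
def IsLine (L : Set (Fin 3 → ℝ)) : Prop :=
  ∃ p v : Fin 3 → ℝ, v ≠ 0 ∧ L = {x | ∃ t : ℝ, x = p + t • v}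

def V₁ : Fin 3 → ℝ := ![0, 0, 0]
def V₂ : Fin 3 → ℝ := ![0, 0, -4]
def V₃ : Fin 3 → ℝ := ![8, -2, -4]
def V₄ : Fin 3 → ℝ := ![6, -3, -6]
def V₅ : Fin 3 → ℝ := ![0, 0, -6]
def V₆ : Fin 3 → ℝ := ![0, 0, -8]
def V₇ : Fin 3 → ℝ := ![10, -1, -8]
def V₈ : Fin 3 → ℝ := ![10, -1, 1]
def V₉ : Fin 3 → ℝ := ![6, 1, 0]
def V₁₀ : Fin 3 → ℝ := ![8, 0, -1]
def V₁₁ : Fin 3 → ℝ := ![6, -1, 0]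
def V₁₂ : Fin 3 → ℝ := ![12, -2, -3]
def V₁₃ : Fin 3 → ℝ := ![12, 0, 0]
def V₁₄ : Fin 3 → ℝ := ![6, 2, 0]

/-- The point V₁₅ = (10,−1,−2) on the edge V₇V₈. -/
def V₁₅ : Fin 3 → ℝ := ![10, -1, -2]

/-- The primary knot K₀: the closed polygon with successive vertices V₁,…,V₁₄. -/
def K₀ : Set (Fin 3 → ℝ) :=
  segment ℝ V₁ V₂ ∪ segment ℝ V₂ V₃ ∪ segment ℝ V₃ V₄ ∪ segment ℝ V₄ V₅ ∪
  segment ℝ V₅ V₆ ∪ segment ℝ V₆ V₇ ∪ segment ℝ V₇ V₈ ∪ segment ℝ V₈ V₉ ∪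
  segment ℝ V₉ V₁₀ ∪ segment ℝ V₁₀ V₁₁ ∪ segment ℝ V₁₁ V₁₂ ∪ segment ℝ V₁₂ V₁₃ ∪
  segment ℝ V₁₃ V₁₄ ∪ segment ℝ V₁₄ V₁

/-- V₃, V₄, V₁₃, V₁₅ are collinear, V₁₅ lies in the open segment between V₇ and V₈,
and hence the line L₂ through V₄ and V₁₃ meets K₀ in at least the four points
V₃, V₄, V₁₃, V₁₅. -/
theorem quadrisecant_L₂_of_K₀ :
    Collinear ℝ ({V₃, V₄, V₁₃, V₁₅} : Set (Fin 3 → ℝ)) ∧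
    V₁₅ ∈ openSegment ℝ V₇ V₈ ∧
    V₃ ≠ V₄ ∧ V₃ ≠ V₁₃ ∧ V₃ ≠ V₁₅ ∧ V₄ ≠ V₁₃ ∧ V₄ ≠ V₁₅ ∧ V₁₃ ≠ V₁₅ ∧
    ({V₃, V₄, V₁₃, V₁₅} : Set (Fin 3 → ℝ)) ⊆
      (affineSpan ℝ ({V₄, V₁₃} : Set (Fin 3 → ℝ)) : Set (Fin 3 → ℝ)) ∩ K₀ := by
  have hV₃ : V₃ = AffineMap.lineMap V₄ V₁₃ (1/3 : ℝ) := by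
    simp [V₃, V₄, V₁₃, AffineMap.lineMap_apply]
    norm_num
  have hV₁₅ : V₁₅ = AffineMap.lineMap V₄ V₁₃ (2/3 : ℝ) := by
    simp [V₁₅, V₄, V₁₃, AffineMap.lineMap_apply]
    norm_num
  have hspan : ({V₃, V₄, V₁₃, V₁₅} : Set (Fin 3 → ℝ)) ⊆
      (affineSpan ℝ ({V₄, V₁₃} : Set (Fin 3 → ℝ)) : Set (Fin 3 → ℝ)) := by
    rintro x (rfl | rfl | rfl | rfl)
    · rw [hV₃]; exact AffineMap.lineMap_mem_affineSpan_pair _ _ _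
    · exact left_mem_affineSpan_pair ℝ _ _
    · exact right_mem_affineSpan_pair ℝ _ _
    · rw [hV₁₅]; exact AffineMap.lineMap_mem_affineSpan_pair _ _ _
  refine ⟨?_, ?_, ?_, ?_, ?_, ?_, ?_, ?_, ?_⟩
  · rw [collinear_iff_of_mem (Set.mem_insert V₃ _)]
    refine ⟨![2, 1, 2], ?_⟩
    rintro p (rfl | rfl | rfl | rfl)
    · exact ⟨0, by funext i; fin_cases i <;> simp [V₃]⟩
    · exact ⟨-1, by funext i; fin_cases i <;> simp [V₃, V₄] <;> norm_num⟩
    · exact ⟨2, by funext i; fin_cases i <;> simp [V₃, V₁₃] <;> norm_num⟩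
    · exact ⟨1, by funext i; fin_cases i <;> simp [V₃, V₁₅] <;> norm_num⟩
  · refine ⟨1/3, 2/3, by norm_num, by norm_num, by norm_num, ?_⟩
    funext i; fin_cases i <;> simp [V₇, V₈, V₁₅] <;> norm_num
  · intro h; have := congrFun h 0; simp [V₃, V₄] at this
  · intro h; have := congrFun h 0; simp [V₃, V₁₃] at this
  · intro h; have := congrFun h 0; simp [V₃, V₁₅] at this
  · intro h; have := congrFun h 0; simp [V₄, V₁₃] at this
  · intro h; have := congrFun h 0; simp [V₄, V₁₅] at this
  · intro h; have := congrFun h 0; simp [V₁₃, V₁₅] at this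
  · intro x hx
    refine ⟨hspan hx, ?_⟩
    rcases hx with rfl | rfl | rfl | rfl
    · exact Or.inl <| Or.inl <| Or.inl <| Or.inl <| Or.inl <| Or.inl <| Or.inl <|
        Or.inl <| Or.inl <| Or.inl <| Or.inl <| Or.inr <| left_mem_segment ℝ _ _
    · exact Or.inl <| Or.inl <| Or.inl <| Or.inl <| Or.inl <| Or.inl <| Or.inl <|
        Or.inl <| Or.inl <| Or.inl <| Or.inl <| Or.inr <| right_mem_segment ℝ _ _
    · exact Or.inl <| Or.inl <| Or.inr <| right_mem_segment ℝ _ _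
    · refine Or.inl <| Or.inl <| Or.inl <| Or.inl <| Or.inl <| Or.inl <| Or.inl <|
        Or.inr <| ⟨1/3, 2/3, by norm_num, by norm_num, by norm_num, ?_⟩
      funext i; fin_cases i <;> simp [V₇, V₈, V₁₅] <;> norm_num
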